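/- Let K = {w ∈ {a,b}⁺ : w begins with the letter a and the letter b occurs in w} (that is, K = a⁺b{a,b}*, over two distinct letters a, b of 𝔄). Then the 3-element monoid L₂¹ and the syntactic monoid M_synt(K) satisfy exactly the same identities (they generate the same variety); moreover, M_synt(K) has exactly five elements. -/

import Mathlib

/-- Words over the countably infinite alphabet `ℕ`. -/
abbrev Word : Type := List ℕ

/-- A monoid `M` satisfies the identity `u ≈ v` if every substitution of letters by
elements of `M` (equivalently, every monoid homomorphism from the free monoid) equalizes
`u` and `v`. -/
def Satisfies (M : Type*) [Monoid M] (u v : Word) : Prop :=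
  ∀ φ : ℕ → M, (u.map φ).prod = (v.map φ).prod

/-- A set of words `W` is stable with respect to a monoid `M`. -/
def Stable (W : Set Word) (M : Type*) [Monoid M] : Prop :=
  ∀ u v : Word, u ∈ W → Satisfies M u v → v ∈ W

/-- `u` is a `τ`-term for the monoid `M`. -/
def IsTerm (τ : Word → Word → Prop) (M : Type*) [Monoid M] (u : Word) : Prop :=
  ∀ v : Word, Satisfies M u v → τ u v

/-- The set of simple letters of a word. -/
def simpSet (u : Word) : Set ℕ := {x | u.count x = 1}

/-- The set of multiple letters of a word. -/
def mulSet (u : Word) : Set ℕ := {x | 2 ≤ u.count x}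

/-- The set of letters of a word. -/
def conSet (u : Word) : Set ℕ := {x | x ∈ u}

/-- The monoid congruence on the free monoid generated by the pairs `(a, a²)`. -/
inductive tau1 : Word → Word → Prop
  | base (a : ℕ) : tau1 [a] [a, a]
  | refl (u : Word) : tau1 u u
  | symm {u v : Word} : tau1 u v → tau1 v u
  | trans {u v x : Word} : tau1 u v → tau1 v x → tau1 u x
  | append {u v u' v' : Word} : tau1 u v → tau1 u' v' → tau1 (u ++ u') (v ++ v')

/-- The relation γ. -/
def gamma (u v : Word) : Prop := simpSet u = simpSet v ∧ mulSet u = mulSet v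

/-- The relation `τ₁ ∧ γ`. -/
def tau1gamma (u v : Word) : Prop := tau1 u v ∧ gamma u v

/-- A word is block-simple if every factor all of whose letters are multiple
(in particular, every block) involves at most one letter. -/
def BlockSimple (u : Word) : Prop :=
  ∀ p f s : Word, u = p ++ f ++ s → (∀ x ∈ f, x ∈ mulSet u) →
    ∀ x ∈ f, ∀ y ∈ f, x = y

/-- `assemble m t A = A 0 ++ t 0 :: A 1 ++ t 1 :: ... ++ t (m-1) :: A m`:
the word with blocks `A i` separated by the letters `t i`. -/
def assemble (m : ℕ) (t : Fin m → ℕ) (A : Fin (m + 1) → Word) : Word :=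
  A 0 ++ (List.ofFn fun i : Fin m => t i :: A i.succ).flatten

/-- Common core of the relations `β` and `∼_Q`: `u` and `v` decompose into blocks
separated by the same simple letters in the same order, corresponding blocks have the
same content; when `withOrder = true`, in corresponding blocks the order of first
occurrences of letters coincides. -/
def betaAux (withOrder : Bool) (u v : Word) : Prop :=
  ∃ (m : ℕ) (t : Fin m → ℕ) (A B : Fin (m + 1) → Word),
    u = assemble m t A ∧ v = assemble m t B ∧
    (∀ i : Fin m, u.count (t i) = 1) ∧ (∀ i : Fin m, v.count (t i) = 1) ∧
    (∀ i : Fin (m + 1), ∀ x ∈ A i, x ∈ mulSet u) ∧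
    (∀ i : Fin (m + 1), ∀ x ∈ B i, x ∈ mulSet v) ∧
    (∀ i : Fin (m + 1), ∀ x : ℕ, x ∈ A i ↔ x ∈ B i) ∧
    (withOrder = true → ∀ i : Fin (m + 1), ∀ x y : ℕ, x ∈ A i → y ∈ A i → x ≠ y →
      ((A i).idxOf x < (A i).idxOf y ↔ (B i).idxOf x < (B i).idxOf y))

/-- The relation β. -/
def beta : Word → Word → Prop := betaAux true

/-- The relation `∼_Q` (β without the condition on the order of first occurrences). -/
def simQ : Word → Word → Prop := betaAux false

/-- The words `u_n` (letters: `a = 0`, `b = 1`, `t_k = k + 1`). -/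
def uW : ℕ → Word
  | 0 => [0, 0, 1, 1]
  | k + 1 => (if k % 2 = 0 then 0 else 1) :: (k + 2) :: uW k

/-- The words `v_n` (letters: `a = 0`, `b = 1`, `t_k = k + 1`). -/
def vW : ℕ → Word
  | 0 => [1, 1, 0, 0]
  | k + 1 => (if k % 2 = 0 then 0 else 1) :: (k + 2) :: vW k

/-- A monoid satisfies the identity system
`Σ_n = {xtx ≈ xtx², xtx ≈ x²tx, xy²x ≈ x²y², u_n ≈ v_n}`. -/
def SatSigma (n : ℕ) (N : Type*) [Monoid N] : Prop :=
  Satisfies N [0, 1, 0] [0, 1, 0, 0] ∧ Satisfies N [0, 1, 0] [0, 0, 1, 0] ∧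
  Satisfies N [0, 1, 1, 0] [0, 0, 1, 1] ∧ Satisfies N (uW n) (vW n)

/-- A monoid is finitely based. -/
def FinBased (M : Type*) [Monoid M] : Prop :=
  ∃ S : Finset (Word × Word),
    (∀ p ∈ S, Satisfies M p.1 p.2) ∧
    ∀ (N : Type) [Monoid N], (∀ p ∈ S, Satisfies N p.1 p.2) →
      ∀ u v : Word, Satisfies M u v → Satisfies N u v

/-- `U_n = x y₁² y₂² ⋯ y_n² x` (letters: `x = 0`, `y_i = i`). -/
def Uw (n : ℕ) : Word := 0 :: (((List.range n).map fun i => [i + 1, i + 1]).flatten ++ [0])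

/-- `V_n = x y₁² x y₂² x ⋯ x y_n² x` (letters: `x = 0`, `y_i = i`). -/
def Vw (n : ℕ) : Word := 0 :: ((List.range n).map fun i => [i + 1, i + 1, 0]).flatten

/-- The language `a⁺bb⁺ta⁺ = {aⁱ bʲ t aᵏ : i, k ≥ 1, j ≥ 2}` (`a = 0`, `b = 1`, `t = 2`). -/
def Lab : Set Word := {w | ∃ i j k : ℕ, 1 ≤ i ∧ 2 ≤ j ∧ 1 ≤ k ∧
  w = List.replicate i 0 ++ List.replicate j 1 ++ 2 :: List.replicate k 0}

/-- The β-class of `atb²a` as an explicit language: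
`{aⁱ t bʲ a w : i ≥ 1, j ≥ 2} ∪ {aⁱ t bʲ aᵏ b w : i, j, k ≥ 1}`, `w ∈ {a,b}*`
(`a = 0`, `b = 1`, `t = 2`). -/
def LatBBa : Set Word :=
  {w | (∃ i j : ℕ, 1 ≤ i ∧ 2 ≤ j ∧ ∃ r : Word, (∀ x ∈ r, x = 0 ∨ x = 1) ∧
      w = List.replicate i 0 ++ 2 :: (List.replicate j 1 ++ 0 :: r)) ∨
    (∃ i j k : ℕ, 1 ≤ i ∧ 1 ≤ j ∧ 1 ≤ k ∧ ∃ r : Word, (∀ x ∈ r, x = 0 ∨ x = 1) ∧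
      w = List.replicate i 0 ++ 2 :: (List.replicate j 1 ++ (List.replicate k 0 ++ 1 :: r)))}

/-- `u` is a factor (subword) of `x`. -/
def IsFactorOf (u x : Word) : Prop := ∃ p s : Word, x = p ++ u ++ s

/-- The syntactic congruence of a language `W`. -/
def SyntCon (W : Set Word) : Con (FreeMonoid ℕ) where
  r u v := ∀ p s : Word,
    p ++ FreeMonoid.toList u ++ s ∈ W ↔ p ++ FreeMonoid.toList v ++ s ∈ W
  iseqv := ⟨fun _ _ _ => Iff.rfl, fun h p s => (h p s).symm,
    fun h h' p s => (h p s).trans (h' p s)⟩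
  mul' := by
    intro w x y z h h' p s
    have h1 := h p (FreeMonoid.toList y ++ s)
    have h2 := h' (p ++ FreeMonoid.toList x) s
    simp only [FreeMonoid.toList_mul, List.append_assoc] at h1 h2 ⊢
    exact h1.trans h2

/-- The syntactic monoid of a language `W`. -/
abbrev SyntMonoid (W : Set Word) : Type := (SyntCon W).Quotient

/-! ### Concrete finite monoids -/

/-- The 7-element monoid `A¹`: identity `e1` adjoined to the semigroup `A = ⟨a,b,c ∣ a²=a, b²=b, ab=ca=0, ac=cb=c⟩ = {a,b,c,ba,bc,0}` (`z0` is the zero). -/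
inductive A1M : Type
  | e1 | a | b | c | ba | bc | z0
deriving DecidableEq

/-- Multiplication of `A1M`. -/
def A1M.mul : A1M → A1M → A1M
  | .e1, .e1 => .e1
  | .e1, .a => .a
  | .e1, .b => .b
  | .e1, .c => .c
  | .e1, .ba => .ba
  | .e1, .bc => .bc
  | .e1, .z0 => .z0
  | .a, .e1 => .a
  | .a, .a => .a
  | .a, .b => .z0
  | .a, .c => .c
  | .a, .ba => .z0
  | .a, .bc => .z0
  | .a, .z0 => .z0
  | .b, .e1 => .b
  | .b, .a => .ba
  | .b, .b => .b
  | .b, .c => .bc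
  | .b, .ba => .ba
  | .b, .bc => .bc
  | .b, .z0 => .z0
  | .c, .e1 => .c
  | .c, .a => .z0
  | .c, .b => .c
  | .c, .c => .z0
  | .c, .ba => .z0
  | .c, .bc => .z0
  | .c, .z0 => .z0
  | .ba, .e1 => .ba
  | .ba, .a => .ba
  | .ba, .b => .z0
  | .ba, .c => .bc
  | .ba, .ba => .z0
  | .ba, .bc => .z0
  | .ba, .z0 => .z0
  | .bc, .e1 => .bc
  | .bc, .a => .z0
  | .bc, .b => .bc
  | .bc, .c => .z0
  | .bc, .ba => .z0
  | .bc, .bc => .z0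
  | .bc, .z0 => .z0
  | .z0, .e1 => .z0
  | .z0, .a => .z0
  | .z0, .b => .z0
  | .z0, .c => .z0
  | .z0, .ba => .z0
  | .z0, .bc => .z0
  | .z0, .z0 => .z0

instance : Monoid A1M where
  one := .e1
  mul := A1M.mul
  mul_assoc := by intro x y z; cases x <;> cases y <;> cases z <;> rfl
  one_mul := by intro x; cases x <;> rfl
  mul_one := by intro x; cases x <;> rfl
/-- The 6-element monoid `E¹`: identity `e1` adjoined to the semigroup `E = ⟨a,b,c ∣ a²=ab=0, ba=ca=a, b²=bc=b, c²=cb=c⟩ = {a,b,c,ac,0}` (`z0` is the zero). -/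
inductive E1M : Type
  | e1 | a | b | c | ac | z0
deriving DecidableEq

/-- Multiplication of `E1M`. -/
def E1M.mul : E1M → E1M → E1M
  | .e1, .e1 => .e1
  | .e1, .a => .a
  | .e1, .b => .b
  | .e1, .c => .c
  | .e1, .ac => .ac
  | .e1, .z0 => .z0
  | .a, .e1 => .a
  | .a, .a => .z0
  | .a, .b => .z0
  | .a, .c => .ac
  | .a, .ac => .z0
  | .a, .z0 => .z0
  | .b, .e1 => .b
  | .b, .a => .a
  | .b, .b => .b
  | .b, .c => .b
  | .b, .ac => .ac
  | .b, .z0 => .z0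
  | .c, .e1 => .c
  | .c, .a => .a
  | .c, .b => .c
  | .c, .c => .c
  | .c, .ac => .ac
  | .c, .z0 => .z0
  | .ac, .e1 => .ac
  | .ac, .a => .z0
  | .ac, .b => .ac
  | .ac, .c => .ac
  | .ac, .ac => .z0
  | .ac, .z0 => .z0
  | .z0, .e1 => .z0
  | .z0, .a => .z0
  | .z0, .b => .z0
  | .z0, .c => .z0
  | .z0, .ac => .z0
  | .z0, .z0 => .z0

instance : Monoid E1M where
  one := .e1
  mul := E1M.mul
  mul_assoc := by intro x y z; cases x <;> cases y <;> cases z <;> rfl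
  one_mul := by intro x; cases x <;> rfl
  mul_one := by intro x; cases x <;> rfl
/-- The 5-element monoid `A₀¹`: identity `e1` adjoined to the semigroup `A₀ = ⟨a,b ∣ a²=a, b²=b, ab=0⟩ = {a,b,ba,0}` (`z0` is the zero). -/
inductive A01M : Type
  | e1 | a | b | ba | z0
deriving DecidableEq

/-- Multiplication of `A01M`. -/
def A01M.mul : A01M → A01M → A01M
  | .e1, .e1 => .e1
  | .e1, .a => .a
  | .e1, .b => .b
  | .e1, .ba => .ba
  | .e1, .z0 => .z0
  | .a, .e1 => .a
  | .a, .a => .a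
  | .a, .b => .z0
  | .a, .ba => .z0
  | .a, .z0 => .z0
  | .b, .e1 => .b
  | .b, .a => .ba
  | .b, .b => .b
  | .b, .ba => .ba
  | .b, .z0 => .z0
  | .ba, .e1 => .ba
  | .ba, .a => .ba
  | .ba, .b => .z0
  | .ba, .ba => .z0
  | .ba, .z0 => .z0
  | .z0, .e1 => .z0
  | .z0, .a => .z0
  | .z0, .b => .z0
  | .z0, .ba => .z0
  | .z0, .z0 => .z0

instance : Monoid A01M where
  one := .e1
  mul := A01M.mul
  mul_assoc := by intro x y z; cases x <;> cases y <;> cases z <;> rfl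
  one_mul := by intro x; cases x <;> rfl
  mul_one := by intro x; cases x <;> rfl


/-- The 3-element monoid `L₂¹`: the two-element left-zero semigroup with identity adjoined. -/
inductive LZ1 : Type
  | e | a | b
deriving DecidableEq

instance : Fintype LZ1 :=
  ⟨{LZ1.e, LZ1.a, LZ1.b}, fun x => by cases x <;> simp⟩

instance : Monoid LZ1 where
  one := .e
  mul x y := match x with
    | .e => y
    | .a => .a
    | .b => .b
  mul_assoc := by intro x y z; cases x <;> cases y <;> cases z <;> rfl
  one_mul := by intro x; cases x <;> rfl
  mul_one := by intro x; cases x <;> rfl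

/-- The 3-element monoid `M(x) = {1, x, 0}` with `x·x = 0`. -/
inductive MX : Type
  | e | x | z
deriving DecidableEq

instance : Fintype MX :=
  ⟨{MX.e, MX.x, MX.z}, fun x => by cases x <;> simp⟩

instance : Monoid MX where
  one := .e
  mul a b := match a, b with
    | .e, b => b
    | a, .e => a
    | _, _ => .z
  mul_assoc := by intro x y z; cases x <;> cases y <;> cases z <;> rfl
  one_mul := by intro x; cases x <;> rfl
  mul_one := by intro x; cases x <;> rfl

/-- first-occurrence dedup -/
def myDedup : Word → Word
  | [] => []
  | a :: t => a :: myDedup (t.filter (· ≠ a))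
termination_by l => l.length
decreasing_by
  simpa using Nat.lt_succ_of_le ((List.length_filter_le (fun x => !decide (x.1 = a)) t.attach).trans_eq List.length_attach)

theorem mem_myDedup : ∀ (l : Word) (x : ℕ), x ∈ myDedup l ↔ x ∈ l := by
  intro l
  induction l using myDedup.induct with
  | case1 => simp [myDedup]
  | case2 a t ih =>
    rw [List.unattach_filter (g := fun x => decide (x ≠ a)) (hf := fun _ _ => rfl), List.unattach_attach] at ih
    intro x
    simp only [myDedup, List.mem_cons, ih, List.mem_filter]
    by_cases hx : x = a <;> simp [hx]

theorem nodup_myDedup : ∀ (l : Word), (myDedup l).Nodup := by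
  intro l
  induction l using myDedup.induct with
  | case1 => simp [myDedup]
  | case2 a t ih =>
    rw [List.unattach_filter (g := fun x => decide (x ≠ a)) (hf := fun _ _ => rfl), List.unattach_attach] at ih
    rw [myDedup]
    refine List.nodup_cons.mpr ⟨?_, ih⟩
    rw [mem_myDedup]
    simp

section Alg
variable {N : Type*} [Monoid N]

theorem absorb_stable (lz : ∀ m n : N, m * n * m = m * n)
    {m x : N} (h : m * x = m) (n : N) : m * n * x = m * n := by
  conv_lhs => rw [← h]
  rw [mul_assoc m x n, mul_assoc m (x * n) x, mul_assoc x n x, ← mul_assoc x n x, lz x n,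
    ← mul_assoc m x n, h]

theorem prod_filter_absorb (lz : ∀ m n : N, m * n * m = m * n) (φ : ℕ → N) (a : ℕ) :
    ∀ (t : Word) (m : N), m * φ a = m →
      m * (t.map φ).prod = m * ((t.filter (· ≠ a)).map φ).prod := by
  intro t
  induction t with
  | nil => intros; rfl
  | cons b t' ih =>
    intro m hm
    by_cases hb : b = a
    · subst hb
      have hf : (b :: t').filter (· ≠ b) = t'.filter (· ≠ b) := by simp [List.filter_cons]
      rw [hf]
      simp only [List.map_cons, List.prod_cons]
      rw [← mul_assoc, hm]
      exact ih m hm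
    · have hf : (b :: t').filter (· ≠ a) = b :: t'.filter (· ≠ a) := by
        simp [List.filter_cons, hb]
      rw [hf]
      simp only [List.map_cons, List.prod_cons]
      rw [← mul_assoc, ← mul_assoc]
      exact ih (m * φ b) (absorb_stable lz hm (φ b))

theorem prod_myDedup (idem : ∀ m : N, m * m = m) (lz : ∀ m n : N, m * n * m = m * n)
    (φ : ℕ → N) : ∀ l : Word, (l.map φ).prod = ((myDedup l).map φ).prod := by
  intro l
  induction l using myDedup.induct with
  | case1 => rw [myDedup]
  | case2 a t ih =>
    rw [List.unattach_filter (g := fun x => decide (x ≠ a)) (hf := fun _ _ => rfl), List.unattach_attach] at ih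
    rw [myDedup]
    simp only [List.map_cons, List.prod_cons]
    rw [prod_filter_absorb lz φ a t (φ a) (idem (φ a)), ih]

theorem sat_of_myDedup (idem : ∀ m : N, m * m = m) (lz : ∀ m n : N, m * n * m = m * n)
    {u v : Word} (h : myDedup u = myDedup v) : Satisfies N u v := by
  intro φ
  rw [prod_myDedup idem lz φ u, prod_myDedup idem lz φ v, h]

end Alg

theorem LZ1.a_mul (m : LZ1) : LZ1.a * m = LZ1.a := rfl
theorem LZ1.b_mul (m : LZ1) : LZ1.b * m = LZ1.b := rfl
theorem LZ1.e_mul (m : LZ1) : LZ1.e * m = m := rfl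

theorem LZ1_idem : ∀ m : LZ1, m * m = m := by decide
theorem LZ1_lz : ∀ m n : LZ1, m * n * m = m * n := by decide

theorem dedup_eq_of_sat : ∀ (d1 d2 : Word), d1.Nodup → d2.Nodup →
    (∀ φ : ℕ → LZ1, ((d1.map φ).prod = (d2.map φ).prod)) → d1 = d2 := by
  intro d1
  induction d1 with
  | nil =>
    intro d2 _ _ H
    cases d2 with
    | nil => rfl
    | cons y t =>
      exfalso
      have h := H (fun _ => LZ1.a)
      simp only [List.map_cons, List.prod_cons, LZ1.a_mul, List.map_nil, List.prod_nil] at h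
      exact absurd h (by decide)
  | cons x t1 ih =>
    intro d2 h1 h2 H
    cases d2 with
    | nil =>
      exfalso
      have h := H (fun _ => LZ1.a)
      simp only [List.map_cons, List.prod_cons, LZ1.a_mul, List.map_nil, List.prod_nil] at h
      exact absurd h (by decide)
    | cons y t2 =>
      have hxy : x = y := by
        by_contra hxy
        set φ := fun c => if c = x then LZ1.a else if c = y then LZ1.b else LZ1.e with hφ
        have h := H φ
        have hφx : φ x = LZ1.a := if_pos rfl
        have hφy : φ y = LZ1.b := by
          simp only [hφ]
          rw [if_neg (fun h => hxy h.symm)]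
          simp
        simp only [List.map_cons, List.prod_cons, hφx, hφy, LZ1.a_mul, LZ1.b_mul] at h
        exact absurd h (by decide)
      subst hxy
      have hx1 : x ∉ t1 := (List.nodup_cons.mp h1).1
      have hx2 : x ∉ t2 := (List.nodup_cons.mp h2).1
      have ht : t1 = t2 := by
        apply ih t2 (List.nodup_cons.mp h1).2 (List.nodup_cons.mp h2).2
        intro ψ
        have h := H (fun c => if c = x then LZ1.e else ψ c)
        simp only [List.map_cons, List.prod_cons, if_pos rfl, LZ1.e_mul] at h
        rwa [List.map_congr_left (fun c hc => if_neg (fun hcx : c = x => hx1 (hcx ▸ hc))),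
          List.map_congr_left (fun c hc => if_neg (fun hcx : c = x => hx2 (hcx ▸ hc)))] at h
      rw [ht]

theorem sat_LZ1_iff (u v : Word) : Satisfies LZ1 u v ↔ myDedup u = myDedup v := by
  constructor
  · intro H
    apply dedup_eq_of_sat _ _ (nodup_myDedup u) (nodup_myDedup v)
    intro φ
    rw [← prod_myDedup LZ1_idem LZ1_lz φ u, ← prod_myDedup LZ1_idem LZ1_lz φ v]
    exact H φ
  · exact sat_of_myDedup LZ1_idem LZ1_lz


abbrev Kset : Set Word := {x : Word | (∀ c ∈ x, c = 0 ∨ c = 1) ∧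
  x.head? = some 0 ∧ 1 ∈ x}

def allowed (u : Word) : Prop := ∀ c ∈ u, c = 0 ∨ c = 1

instance : DecidablePred allowed := fun u => List.decidableBAll _ u

theorem allowed_append {u v : Word} : allowed (u ++ v) ↔ allowed u ∧ allowed v :=
  List.forall_mem_append

theorem mem_Kset {x : Word} : x ∈ Kset ↔ allowed x ∧ x.head? = some 0 ∧ 1 ∈ x := Iff.rfl

theorem syntcon_of {u v : Word} (ha : allowed u ↔ allowed v) (hh : u.head? = v.head?)
    (h1 : (1 : ℕ) ∈ u ↔ (1 : ℕ) ∈ v) (p s : Word) :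
    p ++ u ++ s ∈ Kset ↔ p ++ v ++ s ∈ Kset := by
  simp only [mem_Kset, List.append_assoc, allowed_append, List.mem_append,
    List.head?_append, hh, ha, h1]

theorem not_mem_of_not_allowed {u : Word} (h : ¬ allowed u) (p s : Word) :
    p ++ u ++ s ∉ Kset := by
  intro hm
  exact h fun c hc => hm.1 c (by simp [hc])

theorem con_iff {u v : Word} :
    ((FreeMonoid.ofList u : FreeMonoid ℕ) : SyntMonoid Kset) = (FreeMonoid.ofList v) ↔
      ∀ p s : Word, p ++ u ++ s ∈ Kset ↔ p ++ v ++ s ∈ Kset := by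
  rw [Con.eq]
  constructor
  · intro h p s; simpa using h p s
  · intro h p s; simpa using h p s

theorem ofList_surj (m : SyntMonoid Kset) : ∃ l : Word, m = (FreeMonoid.ofList l) :=
  Quotient.inductionOn m fun w => ⟨FreeMonoid.toList w, rfl⟩

theorem coe_mul_ofList (u v : Word) :
    ((FreeMonoid.ofList u : FreeMonoid ℕ) : SyntMonoid Kset) * (FreeMonoid.ofList v) =
      (FreeMonoid.ofList (u ++ v)) := by
  rw [← Con.coe_mul]
  rfl

theorem idemM : ∀ m : SyntMonoid Kset, m * m = m := by
  intro m
  obtain ⟨l, rfl⟩ := ofList_surj m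
  rw [coe_mul_ofList, con_iff]
  intro p s
  apply syntcon_of
  · rw [allowed_append, and_self]
  · cases l <;> simp
  · simp
  
theorem lzM : ∀ m n : SyntMonoid Kset, m * n * m = m * n := by
  intro m n
  obtain ⟨l, rfl⟩ := ofList_surj m
  obtain ⟨l', rfl⟩ := ofList_surj n
  rw [coe_mul_ofList, coe_mul_ofList, con_iff]
  intro p s
  apply syntcon_of
  · simp only [allowed_append]; tauto
  · cases l <;> cases l' <;> simp
  · simp; tauto

def oL (l : Word) : SyntMonoid Kset := (FreeMonoid.ofList l : FreeMonoid ℕ)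

theorem oL_mul (u v : Word) : oL u * oL v = oL (u ++ v) := coe_mul_ofList u v

theorem oL_eq {u v : Word} : oL u = oL v ↔
    ∀ p s : Word, p ++ u ++ s ∈ Kset ↔ p ++ v ++ s ∈ Kset := con_iff

/-- The embedding of `LZ1` into the syntactic monoid. -/
def iota : LZ1 →* SyntMonoid Kset where
  toFun x := match x with
    | .e => 1
    | .a => oL [0, 1]
    | .b => oL [1]
  map_one' := rfl
  map_mul' := by
    have haa : oL [0,1] * oL [0,1] = oL [0,1] := idemM _
    have hbb : oL [1] * oL [1] = oL [1] := idemM _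
    have hab : oL [0,1] * oL [1] = oL [0,1] := by
      rw [oL_mul, oL_eq]
      intro p s
      apply syntcon_of <;> simp [allowed]
    have hba : oL [1] * oL [0,1] = oL [1] := by
      rw [oL_mul, oL_eq]
      intro p s
      apply syntcon_of <;> simp [allowed]
    intro x y
    cases x <;> cases y <;>
      simp only [one_mul, mul_one] <;>
      first
        | rfl
        | exact haa.symm | exact hbb.symm | exact hab.symm | exact hba.symm

theorem one_eq_oL : (1 : SyntMonoid Kset) = oL [] := rfl

theorem iota_inj : Function.Injective iota := by
  have h1 : oL [] ≠ oL [0,1] := by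
    rw [Ne, oL_eq]
    intro h
    have := (h [] []).mpr (by simp [mem_Kset, allowed])
    simp [mem_Kset] at this
  have h2 : oL [] ≠ oL [1] := by
    rw [Ne, oL_eq]
    intro h
    have := (h [0] []).mpr (by simp [mem_Kset, allowed])
    simp [mem_Kset] at this
  have h3 : oL [0,1] ≠ oL [1] := by
    rw [Ne, oL_eq]
    intro h
    have := (h [] []).mp (by simp [mem_Kset, allowed])
    simp [mem_Kset] at this
  intro x y h
  cases x <;> cases y <;>
    first
      | rfl
      | exact absurd h h1 | exact absurd h h2 | exact absurd h h3
      | exact absurd h.symm h1 | exact absurd h.symm h2 | exact absurd h.symm h3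

theorem sat_iff_main (u v : Word) :
    Satisfies LZ1 u v ↔ Satisfies (SyntMonoid Kset) u v := by
  constructor
  · intro h
    exact sat_of_myDedup idemM lzM ((sat_LZ1_iff u v).mp h)
  · intro h φ
    apply iota_inj
    rw [MonoidHom.map_list_prod, MonoidHom.map_list_prod, List.map_map, List.map_map]
    exact h (⇑iota ∘ φ)

/-- Class invariant: 0 = empty, 1 = a⁺, 2 = K, 3 = starts with b, 4 = zero class. -/
def sigma (u : Word) : Fin 5 :=
  if allowed u then
    (if 1 ∈ u then (if u.head? = some 0 then 2 else 3)
     else (if u.head? = some 0 then 1 else 0))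
  else 4

theorem test1 (u : Word) : [0] ++ u ++ [1] ∈ Kset ↔ allowed u := by
  rw [mem_Kset]
  simp only [List.append_assoc, allowed_append]
  simp [allowed]

theorem test2 (u : Word) : [0] ++ u ++ [] ∈ Kset ↔ allowed u ∧ 1 ∈ u := by
  rw [mem_Kset]
  simp only [List.append_nil, allowed_append]
  simp [allowed]

theorem test3 (u : Word) : [] ++ u ++ [1] ∈ Kset ↔ allowed u ∧ u.head? = some 0 := by
  rw [mem_Kset]
  simp only [List.nil_append, allowed_append]
  cases u with
  | nil => simp [allowed]
  | cons c t => simp [allowed, and_assoc, and_comm]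

theorem headB {u : Word} (ha : allowed u) (h1 : (1:ℕ) ∈ u) (hd : u.head? ≠ some 0) :
    u.head? = some 1 := by
  cases u with
  | nil => simp at h1
  | cons c t =>
    rcases ha c (by simp) with rfl | rfl
    · simp at hd
    · rfl

theorem headE {u : Word} (ha : allowed u) (h1 : (1:ℕ) ∉ u) (hd : u.head? ≠ some 0) :
    u = [] := by
  cases u with
  | nil => rfl
  | cons c t =>
    rcases ha c (by simp) with rfl | rfl
    · simp at hd
    · simp at h1

theorem sigma_eq_of_con {u v : Word}
    (H : ∀ p s : Word, p ++ u ++ s ∈ Kset ↔ p ++ v ++ s ∈ Kset) : sigma u = sigma v := by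
  have e1 : allowed u ↔ allowed v := (test1 u).symm.trans ((H [0] [1]).trans (test1 v))
  have e2 : (allowed u ∧ 1 ∈ u) ↔ (allowed v ∧ 1 ∈ v) :=
    (test2 u).symm.trans ((H [0] []).trans (test2 v))
  have e3 : (allowed u ∧ u.head? = some 0) ↔ (allowed v ∧ v.head? = some 0) :=
    (test3 u).symm.trans ((H [] [1]).trans (test3 v))
  by_cases hau : allowed u
  · have hav : allowed v := e1.mp hau
    have m1 : (1 ∈ u) ↔ (1 ∈ v) :=
      ⟨fun h => (e2.mp ⟨hau, h⟩).2, fun h => (e2.mpr ⟨hav, h⟩).2⟩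
    have hd : (u.head? = some 0) ↔ (v.head? = some 0) :=
      ⟨fun h => (e3.mp ⟨hau, h⟩).2, fun h => (e3.mpr ⟨hav, h⟩).2⟩
    simp only [sigma, if_pos hau, if_pos hav, m1, hd]
  · have hav : ¬ allowed v := fun h => hau (e1.mpr h)
    simp only [sigma, if_neg hau, if_neg hav]

theorem con_of_sigma_eq {u v : Word} (h : sigma u = sigma v) :
    ∀ p s : Word, p ++ u ++ s ∈ Kset ↔ p ++ v ++ s ∈ Kset := by
  by_cases hau : allowed u <;> by_cases hav : allowed v
  · by_cases h1u : (1:ℕ) ∈ u <;> by_cases h1v : (1:ℕ) ∈ v <;>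
      by_cases hdu : u.head? = some 0 <;> by_cases hdv : v.head? = some 0 <;>
      simp only [sigma, hau, hav, h1u, h1v, hdu, hdv, if_true, if_false,
        if_pos, if_neg, not_false_iff] at h <;>
      first
        | exact absurd h (by decide)
        | (exact syntcon_of (iff_of_true hau hav) (hdu.trans hdv.symm)
            (iff_of_true h1u h1v))
        | (exact syntcon_of (iff_of_true hau hav)
            ((headB hau h1u hdu).trans (headB hav h1v hdv).symm) (iff_of_true h1u h1v))
        | (exact syntcon_of (iff_of_true hau hav) (hdu.trans hdv.symm)
            (iff_of_false h1u h1v))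
        | (rw [headE hau h1u hdu, headE hav h1v hdv]; exact fun p s => Iff.rfl)
  · exfalso
    have hv4 : sigma v = 4 := by simp [sigma, hav]
    rw [hv4] at h
    revert h
    simp only [sigma, if_pos hau]
    split_ifs <;> decide
  · exfalso
    have hu4 : sigma u = 4 := by simp [sigma, hau]
    rw [hu4] at h
    revert h
    simp only [sigma, if_pos hav]
    split_ifs <;> decide
  · intro p s
    exact iff_of_false (not_mem_of_not_allowed hau p s) (not_mem_of_not_allowed hav p s)

def Sg : SyntMonoid Kset → Fin 5 :=
  Quotient.lift (fun w : FreeMonoid ℕ => sigma (FreeMonoid.toList w))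
    (fun a b hab => sigma_eq_of_con hab)

theorem Sg_oL (l : Word) : Sg (oL l) = sigma l := rfl

theorem Sg_bij : Function.Bijective Sg := by
  constructor
  · intro m1 m2 h
    obtain ⟨l1, rfl⟩ := ofList_surj m1
    obtain ⟨l2, rfl⟩ := ofList_surj m2
    have : sigma l1 = sigma l2 := h
    exact oL_eq.mpr (con_of_sigma_eq this)
  · intro i
    fin_cases i
    · exact ⟨oL [], by decide⟩
    · exact ⟨oL [0], by decide⟩
    · exact ⟨oL [0, 1], by decide⟩
    · exact ⟨oL [1], by decide⟩
    · exact ⟨oL [2], by decide⟩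

theorem card_five : Nat.card (SyntMonoid Kset) = 5 := by
  rw [Nat.card_eq_of_bijective Sg Sg_bij]
  simp


theorem stmt14 :
    (∀ u v : Word, Satisfies LZ1 u v ↔
      Satisfies (SyntMonoid {x : Word | (∀ c ∈ x, c = 0 ∨ c = 1) ∧
        x.head? = some 0 ∧ 1 ∈ x}) u v) ∧
    Nat.card (SyntMonoid {x : Word | (∀ c ∈ x, c = 0 ∨ c = 1) ∧
      x.head? = some 0 ∧ 1 ∈ x}) = 5 :=
  ⟨sat_iff_main, card_five⟩
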